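/- Let P = {p_1 < p_2 < ... < p_n} be points on a line, and let T be a minimum-weight sink tree rooted at p_x (x ∈ {i,j}) in the complete directed graph on P_{[i,j]} = {p_i, ..., p_j} with weights w(p,q) = |{z ∈ P_{[i,j]} \ {p} : |p−z| ≤ |p−q|}|. Then for any two distinct edges (p_k, p_l) and (p_{k'}, p_{l'}) of T: if k < k' < l then k ≤ l' < l. -/
import Mathlib


/-- Edge weight on the line: `w(p_a, p_b)` computed with respect to the point set
`P_{[lo,hi]} = {p_lo, …, p_hi}`. -/
noncomputable def lineWeight (p : ℕ → ℝ) (lo hi a b : ℕ) : ℕ :=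
  ((Finset.Icc lo hi).filter (fun z => z ≠ a ∧ |p a - p z| ≤ |p a - p b|)).card

/-- `par` encodes a spanning sink tree rooted at `p_x` on the vertex set `P_{[i,j]}`:
every non-root vertex has a parent in the vertex set, and iterating the parent map
reaches the root from every vertex. -/
def IsSinkTreeOn (i j x : ℕ) (par : ℕ → ℕ) : Prop :=
  par x = x ∧ (∀ k ∈ Finset.Icc i j, k ≠ x → par k ∈ Finset.Icc i j ∧ par k ≠ k) ∧
    ∀ k ∈ Finset.Icc i j, ∃ m : ℕ, par^[m] k = x

/-- Total weight of the sink tree encoded by `par` on vertex set `P_{[a,b]}`, with edge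
weights computed with respect to the ambient point set `P_{[lo,hi]}`. -/
noncomputable def sinkTreeWeight (p : ℕ → ℝ) (lo hi a b x : ℕ) (par : ℕ → ℕ) : ℕ :=
  ∑ k ∈ (Finset.Icc a b).erase x, lineWeight p lo hi k (par k)

/-- Strict monotonicity of the weight in the distance to the endpoint. -/
lemma lineWeight_lt (p : ℕ → ℝ) (i j a b c : ℕ)
    (hb : b ∈ Finset.Icc i j) (hba : b ≠ a)
    (h : |p a - p c| < |p a - p b|) :
    lineWeight p i j a c < lineWeight p i j a b := by
  apply Finset.card_lt_card
  constructor
  · intro z hz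
    simp only [Finset.mem_filter] at *
    exact ⟨hz.1, hz.2.1, hz.2.2.trans h.le⟩
  · intro hsub
    have hbmem : b ∈ (Finset.Icc i j).filter
        (fun z => z ≠ a ∧ |p a - p z| ≤ |p a - p b|) := by
      simp [hb, hba]
    have hmem := hsub hbmem
    simp only [Finset.mem_filter] at hmem
    exact absurd hmem.2.2 (not_le.mpr h)

lemma abs_helper1 {p : ℕ → ℝ} (hp : StrictMono p) {a b c : ℕ}
    (h1 : a < b) (h2 : b < c) : |p a - p b| < |p a - p c| := by
  have hb := hp h1
  have hc := hp h2
  rw [abs_of_nonpos (by linarith), abs_of_nonpos (by linarith)]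
  linarith

lemma abs_helper2 {p : ℕ → ℝ} (hp : StrictMono p) {a b c : ℕ}
    (h1 : c < b) (h2 : b < a) : |p a - p b| < |p a - p c| := by
  have hb := hp h1
  have hc := hp h2
  rw [abs_of_nonneg (by linarith), abs_of_nonneg (by linarith)]
  linarith

/-- A vertex of the tree lying on a nontrivial `par`-cycle must be the root. -/
lemma no_cycle (i j x : ℕ) (par : ℕ → ℕ) (hT : IsSinkTreeOn i j x par)
    (k : ℕ) (hk : k ∈ Finset.Icc i j) (m : ℕ) (hm : 0 < m) (hcyc : par^[m] k = k) :
    k = x := by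
  obtain ⟨hx, _, hreach⟩ := hT
  obtain ⟨n, hn⟩ := hreach k hk
  have hfix : ∀ t, par^[n + t] k = x := by
    intro t
    induction t with
    | zero => simpa using hn
    | succ t ih =>
      have h : n + (t + 1) = (n + t) + 1 := by omega
      rw [h, Function.iterate_succ_apply', ih, hx]
  have hcycN : ∀ t, par^[m * t] k = k := by
    intro t
    induction t with
    | zero => simp
    | succ t ih =>
      have h : m * (t + 1) = m + m * t := by ring
      rw [h, Function.iterate_add_apply, ih, hcyc]
  have hle : n ≤ m * (n + 1) := by nlinarith
  have := hfix (m * (n + 1) - n)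
  rw [show n + (m * (n + 1) - n) = m * (n + 1) by omega, hcycN (n + 1)] at this
  exact this

/-- Rerouting the parent of `k` to `c` preserves the sink-tree property provided the
`par`-orbit of `c` avoids `k`. -/
lemma reroute (i j x : ℕ) (par : ℕ → ℕ) (hT : IsSinkTreeOn i j x par)
    (k c : ℕ) (hk : k ∈ Finset.Icc i j) (hkx : k ≠ x)
    (hc : c ∈ Finset.Icc i j) (hck : c ≠ k)
    (havoid : ∀ t, par^[t] c ≠ k) :
    IsSinkTreeOn i j x (Function.update par k c) := by
  obtain ⟨hx, hmem, hreach⟩ := hT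
  set par' := Function.update par k c with hpar'
  have hagree : ∀ v, v ≠ k → par' v = par v := fun v hv => Function.update_of_ne hv _ _
  have hkc : par' k = c := Function.update_self _ _ _
  refine ⟨?_, ?_, ?_⟩
  · rw [hagree x (Ne.symm hkx)]; exact hx
  · intro v hv hvx
    by_cases hvk : v = k
    · subst hvk; rw [hkc]; exact ⟨hc, hck⟩
    · rw [hagree v hvk]; exact hmem v hv hvx
  · have hcreach : ∃ m, par'^[m] c = x := by
      obtain ⟨m, hm⟩ := hreach c hc
      refine ⟨m, ?_⟩
      have horb : ∀ t, par'^[t] c = par^[t] c := by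
        intro t
        induction t with
        | zero => rfl
        | succ t ih =>
          rw [Function.iterate_succ_apply', Function.iterate_succ_apply', ih,
            hagree _ (havoid t)]
      rw [horb]; exact hm
    have key : ∀ n v, par^[n] v = x → ∃ m, par'^[m] v = x := by
      intro n
      induction n with
      | zero => intro v hv; exact ⟨0, hv⟩
      | succ n ih =>
        intro v hv
        by_cases hvk : v = k
        · subst hvk
          obtain ⟨m, hm⟩ := hcreach
          exact ⟨m + 1, by rw [Function.iterate_succ_apply, hkc]; exact hm⟩
        · obtain ⟨m, hm⟩ := ih (par v)
            (by rwa [Function.iterate_succ_apply] at hv)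
          exact ⟨m + 1, by rw [Function.iterate_succ_apply, hagree v hvk]; exact hm⟩
    intro v hv
    obtain ⟨n, hn⟩ := hreach v hv
    exact key n v hn

/-- Rerouting the parent of `k` to a strictly cheaper target strictly decreases the
total weight. -/
lemma weight_lt (p : ℕ → ℝ) (i j x k c : ℕ) (par : ℕ → ℕ)
    (hk : k ∈ (Finset.Icc i j).erase x)
    (hlt : lineWeight p i j k c < lineWeight p i j k (par k)) :
    sinkTreeWeight p i j i j x (Function.update par k c) <
      sinkTreeWeight p i j i j x par := by
  apply Finset.sum_lt_sum
  · intro v hv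
    by_cases hvk : v = k
    · subst hvk
      rw [Function.update_self]
      exact hlt.le
    · rw [Function.update_of_ne hvk]
  · exact ⟨k, hk, by rw [Function.update_self]; exact hlt⟩

/-- non-crossing property (i) of a minimum-weight sink tree on points on a
line: for distinct edges `(p_k, p_l)` and `(p_{k'}, p_{l'})` of the tree (so `l = par k`,
`l' = par k'`), if `k < k' < l` then `k ≤ l' < l`. -/
theorem minWeight_sinkTree_noncrossing_i
    (p : ℕ → ℝ) (hp : StrictMono p) (i j x : ℕ) (hij : i ≤ j) (hx : x = i ∨ x = j)
    (par : ℕ → ℕ) (hT : IsSinkTreeOn i j x par)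
    (hmin : ∀ par' : ℕ → ℕ, IsSinkTreeOn i j x par' →
      sinkTreeWeight p i j i j x par ≤ sinkTreeWeight p i j i j x par')
    (k k' : ℕ) (hk : k ∈ Finset.Icc i j) (hk' : k' ∈ Finset.Icc i j)
    (hkx : k ≠ x) (hk'x : k' ≠ x) (hne : k ≠ k')
    (h1 : k < k') (h2 : k' < par k) :
    k ≤ par k' ∧ par k' < par k := by
  have hlmem : par k ∈ Finset.Icc i j := (hT.2.1 k hk hkx).1
  have hlk : par k ≠ k := (hT.2.1 k hk hkx).2
  have hl'mem : par k' ∈ Finset.Icc i j := (hT.2.1 k' hk' hk'x).1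
  have hl'k' : par k' ≠ k' := (hT.2.1 k' hk' hk'x).2
  -- Step 1: k is an ancestor of k' in the tree.
  have hanc : ∃ m, par^[m] k' = k := by
    by_contra hno
    push_neg at hno
    have htree' := reroute i j x par hT k k' hk hkx hk' (Ne.symm hne) hno
    have hw := hmin _ htree'
    have hwlt : sinkTreeWeight p i j i j x (Function.update par k k') <
        sinkTreeWeight p i j i j x par :=
      weight_lt p i j x k k' par (Finset.mem_erase.mpr ⟨hkx, hk⟩)
        (lineWeight_lt p i j k (par k) k' hlmem hlk (abs_helper1 hp h1 h2))
    exact absurd hwlt hw.not_gt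
  obtain ⟨m, hm⟩ := hanc
  have hmpos : 0 < m := by
    rcases Nat.eq_zero_or_pos m with h | h
    · subst h; simp at hm; exact absurd hm.symm hne
    · exact h
  -- Step 2: par k' < par k.
  have hstep2 : par k' < par k := by
    by_contra hge
    push_neg at hge
    rcases eq_or_lt_of_le hge with heq | hlt
    · -- par k = par k' would create a cycle through k
      have hcyc : par^[m] k = k := by
        have h0 : par^[m] k' = par^[m - 1] (par k') := by
          conv_lhs => rw [show m = (m - 1) + 1 by omega]
          rw [Function.iterate_succ_apply]
        rw [h0, ← heq] at hm
        calc par^[m] k = par^[m - 1] (par k) := by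
              conv_lhs => rw [show m = (m - 1) + 1 by omega]
              rw [Function.iterate_succ_apply]
          _ = k := hm
      exact hkx (no_cycle i j x par hT k hk m hmpos hcyc)
    · -- par k < par k' : reroute k' to par k, strictly cheaper
      have havoid : ∀ t, par^[t] (par k) ≠ k' := by
        intro t hcon
        have ht1 : par^[t + 1] k = k' := by
          rw [Function.iterate_succ_apply]; exact hcon
        have hc : par^[m + (t + 1)] k = k := by
          rw [Function.iterate_add_apply, ht1, hm]
        exact hkx (no_cycle i j x par hT k hk _ (by omega) hc)
      have htree' := reroute i j x par hT k' (par k) hk' hk'x hlmem h2.ne' havoid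
      have hw := hmin _ htree'
      have hwlt : sinkTreeWeight p i j i j x (Function.update par k' (par k)) <
          sinkTreeWeight p i j i j x par :=
        weight_lt p i j x k' (par k) par (Finset.mem_erase.mpr ⟨hk'x, hk'⟩)
          (lineWeight_lt p i j k' (par k') (par k) hl'mem hl'k'
            (abs_helper1 hp h2 hlt))
      exact absurd hwlt hw.not_gt
  -- Step 3: k ≤ par k'.
  have hstep3 : k ≤ par k' := by
    by_contra hltk
    push_neg at hltk
    have havoid : ∀ t, par^[t] k ≠ k' := by
      intro t hcon
      have hc : par^[t + m] k' = k' := by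
        rw [Function.iterate_add_apply, hm, hcon]
      exact hk'x (no_cycle i j x par hT k' hk' _ (by omega) hc)
    have htree' := reroute i j x par hT k' k hk' hk'x hk hne havoid
    have hw := hmin _ htree'
    have hwlt : sinkTreeWeight p i j i j x (Function.update par k' k) <
        sinkTreeWeight p i j i j x par :=
      weight_lt p i j x k' k par (Finset.mem_erase.mpr ⟨hk'x, hk'⟩)
        (lineWeight_lt p i j k' (par k') k hl'mem hl'k'
          (abs_helper2 hp hltk h1))
    exact absurd hwlt hw.not_gt
  exact ⟨hstep3, hstep2⟩
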